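/- Let A = [a_ij] be an n×n fully indecomposable (0,1)-matrix and let X = [x_ij] be an RCDS doubly stochastic matrix with ξ(X) = ξ(A). Then there exist real vectors u = (u_1,…,u_n) and v = (v_1,…,v_n) such that x_ij = u_i + v_j for all positions (i,j) with a_ij = 1. -/

import Mathlib

/-- `X` is doubly stochastic: nonnegative entries and all row and column sums equal 1. -/
def DoublyStochastic {n : ℕ} (X : Matrix (Fin n) (Fin n) ℝ) : Prop :=
  (∀ i j, 0 ≤ X i j) ∧ (∀ i, ∑ j, X i j = 1) ∧ (∀ j, ∑ i, X i j = 1)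

/-- `X` has restricted constant diagonal sums. -/
def RCDS {n : ℕ} (X : Matrix (Fin n) (Fin n) ℝ) : Prop :=
  ∀ σ τ : Equiv.Perm (Fin n), (∀ i, 0 < X i (σ i)) → (∀ i, 0 < X i (τ i)) →
    ∑ i, X i (σ i) = ∑ i, X i (τ i)

/-- `A` is fully indecomposable: there are no nonempty `I, J ⊆ {1,…,n}` with
`|I| + |J| = n` and `A i j = 0` for all `i ∈ I`, `j ∈ J`. -/
def FullyIndecomposable {n : ℕ} (A : Matrix (Fin n) (Fin n) ℝ) : Prop :=
  ¬ ∃ (I J : Finset (Fin n)), I.Nonempty ∧ J.Nonempty ∧ I.card + J.card = n ∧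
      ∀ i ∈ I, ∀ j ∈ J, A i j = 0

namespace RCDSAux

variable {α : Type*}

/-- Last vertex of the walk `a :: l`. -/
def lastv (a : α) : List α → α
  | [] => a
  | b :: l => lastv b l

@[simp] lemma lastv_nil (a : α) : lastv a ([] : List α) = a := rfl

@[simp] lemma lastv_cons (a b : α) (l : List α) : lastv a (b :: l) = lastv b l := rfl

lemma lastv_append (a : α) (l1 l2 : List α) :
    lastv a (l1 ++ l2) = lastv (lastv a l1) l2 := by
  induction l1 generalizing a with
  | nil => rfl
  | cons b t ih => simp [ih]

@[simp] lemma lastv_concat (a b : α) (l : List α) : lastv a (l ++ [b]) = b := by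
  simp [lastv_append]

lemma lastv_eq_getLast (a : α) (l : List α) :
    lastv a l = (a :: l).getLast (List.cons_ne_nil a l) := by
  induction l generalizing a with
  | nil => rfl
  | cons b t ih => rw [lastv_cons, ih, List.getLast_cons_cons]

/-- Sum of `y` along the walk `a :: l`. -/
def chainSum (y : α → α → ℝ) : α → List α → ℝ
  | _, [] => 0
  | a, b :: l => y a b + chainSum y b l

@[simp] lemma chainSum_nil (y : α → α → ℝ) (a : α) : chainSum y a [] = 0 := rfl

@[simp] lemma chainSum_cons (y : α → α → ℝ) (a b : α) (l : List α) :
    chainSum y a (b :: l) = y a b + chainSum y b l := rfl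

lemma chainSum_append (y : α → α → ℝ) (a : α) (l1 l2 : List α) :
    chainSum y a (l1 ++ l2) = chainSum y a l1 + chainSum y (lastv a l1) l2 := by
  induction l1 generalizing a with
  | nil => simp
  | cons b t ih => simp [ih, add_assoc]

lemma chain_append_of {E : α → α → Prop} {a : α} {l1 l2 : List α}
    (h1 : List.Chain E a l1) (h2 : List.Chain E (lastv a l1) l2) :
    List.Chain E a (l1 ++ l2) := by
  induction l1 generalizing a with
  | nil => simpa using h2
  | cons b t ih =>
    simp only [List.Chain, List.chain_cons] at h1
    exact List.chain_cons.2 ⟨h1.1, ih h1.2 h2⟩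

lemma chain_of_append_left {E : α → α → Prop} {a : α} {l1 l2 : List α}
    (h : List.Chain E a (l1 ++ l2)) : List.Chain E a l1 := by
  induction l1 generalizing a with
  | nil => exact List.Chain.nil
  | cons b t ih =>
    simp only [List.cons_append, List.Chain, List.chain_cons] at h
    exact List.chain_cons.2 ⟨h.1, ih h.2⟩

lemma chain_of_append_right {E : α → α → Prop} {a : α} {l1 l2 : List α}
    (h : List.Chain E a (l1 ++ l2)) : List.Chain E (lastv a l1) l2 := by
  induction l1 generalizing a with
  | nil => simpa using h
  | cons b t ih =>
    simp only [List.cons_append, List.Chain, List.chain_cons] at h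
    exact ih h.2

/-- Extract a duplicated element from a non-nodup list. -/
lemma exists_dup_split {l : List α} (h : ¬ l.Nodup) :
    ∃ (l1 : List α) (x : α) (l2 : List α), l = l1 ++ x :: l2 ∧ x ∈ l2 := by
  induction l with
  | nil => exact absurd List.nodup_nil h
  | cons b t ih =>
    by_cases hb : b ∈ t
    · exact ⟨[], b, t, rfl, hb⟩
    · have ht : ¬ t.Nodup := fun hnd => h (List.nodup_cons.2 ⟨hb, hnd⟩)
      obtain ⟨l1, x, l2, rfl, hx⟩ := ih ht
      exact ⟨b :: l1, x, l2, rfl, hx⟩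

variable [DecidableEq α]

open List in
lemma formPerm_map_sum (y : α → α → ℝ) :
    ∀ (d : List α) (a : α), (a :: d).Nodup →
      ((a :: d).map fun x => y x ((a :: d).formPerm x)).sum
        = chainSum y a d + y (lastv a d) a := by
  intro d
  induction d with
  | nil => intro a _; simp
  | cons b t ih =>
    intro a hnd
    have hnd' : (b :: t).Nodup := hnd.of_cons
    have ha : a ∉ b :: t := (List.nodup_cons.1 hnd).1
    set σ' := (b :: t).formPerm with hσ'
    set L : α := lastv b t with hL
    have hLmem : L ∈ b :: t := by
      rw [hL, lastv_eq_getLast]; exact List.getLast_mem _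
    have hσL : σ' L = b := by
      rw [hL, lastv_eq_getLast]; exact List.formPerm_apply_getLast b t
    -- action of formPerm (a :: b :: t)
    have hact : ∀ x ∈ b :: t, x ≠ L →
        (a :: b :: t).formPerm x = σ' x := by
      intro x hx hxL
      rw [List.formPerm_cons_cons, Equiv.Perm.mul_apply, Equiv.swap_apply_of_ne_of_ne]
      · intro hcon
        exact ha (hcon ▸ List.formPerm_apply_mem_of_mem hx)
      · intro hcon
        exact hxL (σ'.injective (hcon.trans hσL.symm))
    have hactL : (a :: b :: t).formPerm L = a := by
      rw [List.formPerm_cons_cons, Equiv.Perm.mul_apply, hσL, Equiv.swap_apply_right]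
    have hacta : (a :: b :: t).formPerm a = b := by
      rw [List.formPerm_cons_cons, Equiv.Perm.mul_apply,
        List.formPerm_apply_of_notMem ha, Equiv.swap_apply_left]
    -- sum over (b :: t) via erase L
    have hnodup_bt := hnd'
    have hsum1 : ((b :: t).map fun x => y x ((a :: b :: t).formPerm x)).sum
        = ∑ x ∈ (b :: t).toFinset, y x ((a :: b :: t).formPerm x) :=
      (List.sum_toFinset _ hnodup_bt).symm
    have hsum2 : ((b :: t).map fun x => y x (σ' x)).sum
        = ∑ x ∈ (b :: t).toFinset, y x (σ' x) :=
      (List.sum_toFinset _ hnodup_bt).symm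
    have hLfin : L ∈ (b :: t).toFinset := List.mem_toFinset.2 hLmem
    have hsplit1 : ∑ x ∈ (b :: t).toFinset, y x ((a :: b :: t).formPerm x)
        = y L a + ∑ x ∈ (b :: t).toFinset.erase L, y x (σ' x) := by
      rw [← Finset.add_sum_erase _ _ hLfin, hactL]
      congr 1
      refine Finset.sum_congr rfl fun x hx => ?_
      rw [hact x (List.mem_toFinset.1 (Finset.mem_of_mem_erase hx))
        (Finset.ne_of_mem_erase hx)]
    have hsplit2 : ∑ x ∈ (b :: t).toFinset, y x (σ' x)
        = y L b + ∑ x ∈ (b :: t).toFinset.erase L, y x (σ' x) := by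
      rw [← Finset.add_sum_erase _ _ hLfin, hσL]
    have IH := ih b hnd'
    -- assemble
    have : ((a :: b :: t).map fun x => y x ((a :: b :: t).formPerm x)).sum
        = y a b + ((b :: t).map fun x => y x ((a :: b :: t).formPerm x)).sum := by
      rw [List.map_cons, List.sum_cons, hacta]
    rw [this, hsum1, hsplit1]
    have herase : ∑ x ∈ (b :: t).toFinset.erase L, y x (σ' x)
        = chainSum y b t + y L b - y L b := by
      have := hsplit2
      rw [hsum2.symm, IH] at this
      linarith [this]
    rw [herase]
    simp [chainSum_cons, lastv_cons]
    ring

open List in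
lemma formPerm_edges (E : α → α → Prop) (hEr : ∀ i, E i i) :
    ∀ (d : List α) (a : α), (a :: d).Nodup → List.Chain E a d →
      ∀ x ∈ a :: d, x ≠ lastv a d → E x ((a :: d).formPerm x) := by
  intro d
  induction d with
  | nil =>
    intro a _ _ x hx hxL
    simp at hx
    exact absurd (by simp [hx]) hxL
  | cons b t ih =>
    intro a hnd hch x hx hxL
    have hnd' : (b :: t).Nodup := hnd.of_cons
    have ha : a ∉ b :: t := (List.nodup_cons.1 hnd).1
    simp only [List.Chain, List.chain_cons] at hch
    rcases List.mem_cons.1 hx with rfl | hx'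
    · rw [List.formPerm_cons_cons, Equiv.Perm.mul_apply,
        List.formPerm_apply_of_notMem ha, Equiv.swap_apply_left]
      exact hch.1
    · have hL : lastv a (b :: t) = lastv b t := rfl
      have hxL' : x ≠ lastv b t := by rw [hL] at hxL; exact hxL
      have hstep : (b :: t).formPerm x ≠ a := by
        intro hcon
        exact ha (hcon ▸ List.formPerm_apply_mem_of_mem hx')
      have hstepb : (b :: t).formPerm x ≠ b := by
        intro hcon
        have hσL : (b :: t).formPerm (lastv b t) = b := by
          rw [lastv_eq_getLast]; exact List.formPerm_apply_getLast b t
        exact hxL' (((b :: t).formPerm).injective (hcon.trans hσL.symm))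
      rw [List.formPerm_cons_cons, Equiv.Perm.mul_apply,
        Equiv.swap_apply_of_ne_of_ne hstep hstepb]
      exact ih b hnd' hch.2 x hx' hxL'


open List in
lemma closed_walk_sum [Fintype α] (y : α → α → ℝ) (E : α → α → Prop)
    (hEr : ∀ i, E i i) (hy0 : ∀ i, y i i = 0)
    (hperm : ∀ τ : Equiv.Perm α, (∀ i, E i (τ i)) → ∑ i, y i (τ i) = 0) :
    ∀ (m : ℕ) (l : List α) (a : α), l.length ≤ m → List.Chain E a l → lastv a l = a →
      chainSum y a l = 0 := by
  intro m
  induction m with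
  | zero =>
    intro l a hlen _ _
    rw [Nat.le_zero, List.length_eq_zero_iff] at hlen
    subst hlen; simp
  | succ m ih =>
    intro l a hlen hch hlast
    by_cases hl : l = []
    · simp [hl]
    -- l = l.dropLast ++ [a]
    have hgl : l.getLast hl = a := by
      have h1 := lastv_eq_getLast a l
      rw [List.getLast_cons hl] at h1
      rw [← h1, hlast]
    have hld : l = l.dropLast ++ [a] := by
      conv_lhs => rw [← List.dropLast_append_getLast hl]
      rw [hgl]
    by_cases hmemA : a ∈ l.dropLast
    · -- case A : start vertex revisited
      obtain ⟨l1, l2, hsplit⟩ := List.append_of_mem hmemA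
      have hleq : l = (l1 ++ [a]) ++ (l2 ++ [a]) := by
        rw [hld, hsplit]; simp
      have hlen' : l.length = l1.length + l2.length + 2 := by
        rw [hleq]; simp; omega
      have hch1 : List.Chain E a (l1 ++ [a]) := by
        rw [hleq] at hch; exact chain_of_append_left hch
      have hch2 : List.Chain E a (l2 ++ [a]) := by
        rw [hleq] at hch
        have := chain_of_append_right (a := a) (l1 := l1 ++ [a]) hch
        simpa using this
      have hs1 : chainSum y a (l1 ++ [a]) = 0 := by
        apply ih _ a (by simp; omega) hch1 (by simp)
      have hs2 : chainSum y a (l2 ++ [a]) = 0 := by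
        apply ih _ a (by simp; omega) hch2 (by simp)
      have e1 : chainSum y a l = chainSum y a (l1 ++ [a]) + chainSum y a (l2 ++ [a]) := by
        rw [hleq, chainSum_append y a (l1 ++ [a]), lastv_concat]
      linarith [e1, hs1, hs2]
    by_cases hnd : l.dropLast.Nodup
    · -- case C : genuine cycle
      have hndd : (a :: l.dropLast).Nodup := List.nodup_cons.2 ⟨hmemA, hnd⟩
      set d : List α := a :: l.dropLast with hd
      set τ : Equiv.Perm α := d.formPerm with hτ
      have hchd : List.Chain E a l.dropLast := by
        rw [hld] at hch; exact chain_of_append_left hch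
      set L : α := lastv a l.dropLast with hL
      have hELa : E L a := by
        rw [hld] at hch
        have := chain_of_append_right (l1 := l.dropLast) hch
        rw [← hL] at this
        exact (List.chain_cons.1 this).1
      have hτL : τ L = a := by
        rw [hτ, hL, lastv_eq_getLast]
        exact List.formPerm_apply_getLast a l.dropLast
      have hedge : ∀ i, E i (τ i) := by
        intro i
        by_cases hmem : i ∈ d
        · by_cases hiL : i = L
          · rw [hiL, hτL]; exact hELa
          · exact formPerm_edges E hEr l.dropLast a hndd hchd i hmem hiL
        · rw [hτ, List.formPerm_apply_of_notMem hmem]; exact hEr i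
      have hsum := hperm τ hedge
      have hsub : ∑ i ∈ d.toFinset, y i (τ i) = ∑ i, y i (τ i) := by
        apply Finset.sum_subset (Finset.subset_univ _)
        intro i _ hnot
        rw [hτ, List.formPerm_apply_of_notMem (fun hc => hnot (List.mem_toFinset.2 hc))]
        exact hy0 i
      have hfin : ∑ i ∈ d.toFinset, y i (τ i) = chainSum y a l.dropLast + y L a := by
        rw [List.sum_toFinset _ hndd]
        exact formPerm_map_sum y l.dropLast a hndd
      have : chainSum y a l = chainSum y a l.dropLast + y L a := by
        conv_lhs => rw [hld]
        rw [chainSum_append]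
        simp [hL]
      rw [this, ← hfin, hsub, hsum]
    · -- case B : interior repeat
      obtain ⟨l1, x, l2, hsp, hx2⟩ := exists_dup_split hnd
      obtain ⟨l2a, l2b, hsp2⟩ := List.append_of_mem hx2
      have hleq : l = (l1 ++ [x]) ++ ((l2a ++ [x]) ++ (l2b ++ [a])) := by
        rw [hld, hsp, hsp2]; simp
      have hlen' : l.length = l1.length + l2a.length + l2b.length + 3 := by
        rw [hleq]; simp; omega
      have hch1 : List.Chain E a (l1 ++ [x]) := by
        rw [hleq] at hch; exact chain_of_append_left hch
      have hchR : List.Chain E x ((l2a ++ [x]) ++ (l2b ++ [a])) := by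
        rw [hleq] at hch
        have := chain_of_append_right (l1 := l1 ++ [x]) hch
        simpa using this
      have hch2 : List.Chain E x (l2a ++ [x]) := chain_of_append_left hchR
      have hch3 : List.Chain E x (l2b ++ [a]) := by
        have := chain_of_append_right (l1 := l2a ++ [x]) hchR
        simpa using this
      have hs2 : chainSum y x (l2a ++ [x]) = 0 := by
        apply ih _ x (by simp; omega) hch2 (by simp)
      have houter : chainSum y a ((l1 ++ [x]) ++ (l2b ++ [a])) = 0 := by
        apply ih _ a ?_ ?_ ?_
        · simp; omega
        · exact chain_append_of hch1 (by simpa using hch3)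
        · simp [lastv_append]
      have e1 : chainSum y a l
          = chainSum y a (l1 ++ [x]) + (chainSum y x (l2a ++ [x]) + chainSum y x (l2b ++ [a])) := by
        rw [hleq, chainSum_append y a (l1 ++ [x]), lastv_concat,
          chainSum_append y x (l2a ++ [x]), lastv_concat]
      have e2 : chainSum y a ((l1 ++ [x]) ++ (l2b ++ [a]))
          = chainSum y a (l1 ++ [x]) + chainSum y x (l2b ++ [a]) := by
        rw [chainSum_append y a (l1 ++ [x]), lastv_concat]
      linarith [e1, e2, houter, hs2]


lemma walk_of_reach {E : α → α → Prop} {a b : α} (h : Relation.ReflTransGen E a b) :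
    ∃ l, List.Chain E a l ∧ lastv a l = b := by
  induction h with
  | refl => exact ⟨[], List.Chain.nil, rfl⟩
  | @tail b c _ hbc ih =>
    obtain ⟨l, hc, hl⟩ := ih
    refine ⟨l ++ [c], chain_append_of hc ?_, by simp⟩
    rw [hl]
    exact List.chain_cons.2 ⟨hbc, List.Chain.nil⟩

end RCDSAux

open RCDSAux in
theorem rcds_char_necessity {n : ℕ} (A X : Matrix (Fin n) (Fin n) ℝ)
    (hA01 : ∀ i j, A i j = 0 ∨ A i j = 1)
    (hFI : FullyIndecomposable A)
    (hDS : DoublyStochastic X)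
    (hRCDS : RCDS X)
    (hpattern : ∀ i j, X i j = 0 ↔ A i j = 0) :
    ∃ u v : Fin n → ℝ, ∀ i j, A i j = 1 → X i j = u i + v j := by
  rcases Nat.eq_zero_or_pos n with hn | hn
  · subst hn; exact ⟨0, 0, fun i => i.elim0⟩
  obtain ⟨hpos, hrow, hcol⟩ := hDS
  classical
  -- a positive diagonal via Hall's theorem
  set t : Fin n → Finset (Fin n) := fun i => Finset.univ.filter (fun j => 0 < X i j) with ht
  have hrow' : ∀ i, ∑ j ∈ t i, X i j = 1 := by
    intro i
    rw [← hrow i]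
    exact Finset.sum_filter_of_ne (fun j _ hj => lt_of_le_of_ne (hpos i j) (Ne.symm hj))
  have hall : ∀ s : Finset (Fin n), s.card ≤ (s.biUnion t).card := by
    intro s
    have h1 : (s.card : ℝ) = ∑ i ∈ s, ∑ j ∈ t i, X i j := by
      simp [hrow']
    have h2 : (∑ i ∈ s, ∑ j ∈ t i, X i j) ≤ ∑ i ∈ s, ∑ j ∈ s.biUnion t, X i j := by
      apply Finset.sum_le_sum
      intro i hi
      apply Finset.sum_le_sum_of_subset_of_nonneg (Finset.subset_biUnion_of_mem t hi)
      intro j _ _; exact hpos i j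
    have h3 : (∑ i ∈ s, ∑ j ∈ s.biUnion t, X i j) ≤ ((s.biUnion t).card : ℝ) := by
      rw [Finset.sum_comm (f := fun i j => X i j)]
      calc (∑ j ∈ s.biUnion t, ∑ i ∈ s, X i j) ≤ ∑ j ∈ s.biUnion t, (1:ℝ) := by
            apply Finset.sum_le_sum
            intro j _
            rw [← hcol j]
            apply Finset.sum_le_sum_of_subset_of_nonneg (Finset.subset_univ s)
            intro i _ _; exact hpos i j
        _ = ((s.biUnion t).card : ℝ) := by simp
    have : (s.card : ℝ) ≤ ((s.biUnion t).card : ℝ) := by linarith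
    exact_mod_cast this
  obtain ⟨f, hfinj, hf⟩ := (Finset.all_card_le_biUnion_card_iff_exists_injective t).1 hall
  have hfbij : Function.Bijective f := (Finite.injective_iff_bijective).1 hfinj
  set σ0 : Equiv.Perm (Fin n) := Equiv.ofBijective f hfbij with hσ0
  have h0 : ∀ i, 0 < X i (σ0 i) := by
    intro i
    have h := hf i
    rw [ht, Finset.mem_filter] at h
    exact h.2
  -- the digraph and the edge weights
  set E : Fin n → Fin n → Prop := fun i j => 0 < X i (σ0 j) with hE
  set y : Fin n → Fin n → ℝ := fun i j => X i (σ0 j) - X i (σ0 i) with hy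
  have hEr : ∀ i, E i i := h0
  have hy0 : ∀ i, y i i = 0 := fun i => sub_self _
  have hperm : ∀ τ : Equiv.Perm (Fin n), (∀ i, E i (τ i)) → ∑ i, y i (τ i) = 0 := by
    intro τ hτ
    have h1 : ∀ i, 0 < X i ((τ.trans σ0) i) := fun i => hτ i
    have h2 : ∑ i, X i (σ0 (τ i)) = ∑ i, X i (σ0 i) := hRCDS (τ.trans σ0) σ0 h1 h0
    have : ∑ i, y i (τ i) = ∑ i, (X i (σ0 (τ i)) - X i (σ0 i)) := rfl
    rw [this, Finset.sum_sub_distrib, h2, sub_self]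
  -- strong connectivity from full indecomposability
  have hreach : ∀ a b : Fin n, Relation.ReflTransGen E a b := by
    intro a b
    by_contra hb
    set K : Finset (Fin n) := Finset.univ.filter (fun c => Relation.ReflTransGen E a c) with hK
    apply hFI
    refine ⟨K, Kᶜ.image σ0, ⟨a, ?_⟩, ⟨σ0 b, ?_⟩, ?_, ?_⟩
    · rw [hK, Finset.mem_filter]
      exact ⟨Finset.mem_univ a, Relation.ReflTransGen.refl⟩
    · apply Finset.mem_image_of_mem σ0
      rw [Finset.mem_compl, hK]
      simpa using hb
    · rw [Finset.card_image_of_injective _ σ0.injective, Finset.card_compl]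
      have hKle : K.card ≤ n := by simpa using Finset.card_le_card (Finset.subset_univ K)
      simp only [Fintype.card_fin]
      omega
    · intro i hi j hj
      obtain ⟨b', hb', rfl⟩ := Finset.mem_image.1 hj
      apply (hpattern _ _).1
      by_contra hX
      have hXpos : 0 < X i (σ0 b') := lt_of_le_of_ne (hpos _ _) (Ne.symm hX)
      have hiK : Relation.ReflTransGen E a i := by
        rw [hK] at hi; simpa using hi
      have hrb : Relation.ReflTransGen E a b' := hiK.tail hXpos
      rw [Finset.mem_compl, hK] at hb'
      exact hb' (by simpa using hrb)
  -- walks and potentials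
  have hwalk : ∀ a b : Fin n, ∃ l, List.Chain E a l ∧ lastv a l = b :=
    fun a b => walk_of_reach (hreach a b)
  have key := closed_walk_sum y E hEr hy0 hperm
  set i0 : Fin n := ⟨0, hn⟩ with hi0
  choose w hwch hwl using fun j => hwalk i0 j
  choose r hrch hrl using fun j => hwalk j i0
  set p : Fin n → ℝ := fun j => chainSum y i0 (w j) with hp
  set q : Fin n → ℝ := fun j => chainSum y j (r j) with hq
  have hclosed : ∀ j, p j + q j = 0 := by
    intro j
    have hcat : chainSum y i0 (w j ++ r j) = p j + q j := by
      rw [chainSum_append, hwl j]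
    have hz := key (w j ++ r j).length (w j ++ r j) i0 le_rfl
      (chain_append_of (hwch j) (by rw [hwl j]; exact hrch j))
      (by rw [lastv_append, hwl j, hrl j])
    rw [hcat] at hz
    exact hz
  have hedge : ∀ i j, E i j → y i j = p j - p i := by
    intro i j hij
    have hlist : List.Chain E i0 (w i ++ j :: r j) := by
      apply chain_append_of (hwch i)
      rw [hwl i]
      exact List.chain_cons.2 ⟨hij, hrch j⟩
    have hlast : lastv i0 (w i ++ j :: r j) = i0 := by
      rw [lastv_append, hwl i, lastv_cons, hrl j]
    have hz := key _ _ _ le_rfl hlist hlast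
    have hsum : chainSum y i0 (w i ++ j :: r j) = p i + (y i j + q j) := by
      rw [chainSum_append, hwl i, chainSum_cons]
    rw [hsum] at hz
    have h1 := hclosed j
    linarith
  -- final assembly
  refine ⟨fun i => X i (σ0 i) - p i, fun j => p (σ0.symm j), ?_⟩
  intro i j hAij
  have hXij : 0 < X i j := by
    apply lt_of_le_of_ne (hpos i j)
    intro hc
    rw [(hpattern i j).1 hc.symm] at hAij
    exact zero_ne_one hAij
  have hjj : σ0 (σ0.symm j) = j := σ0.apply_symm_apply j
  have hEij : E i (σ0.symm j) := by
    show 0 < X i (σ0 (σ0.symm j))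
    rw [hjj]; exact hXij
  have hyij := hedge i (σ0.symm j) hEij
  have hyval : y i (σ0.symm j) = X i j - X i (σ0 i) := by
    show X i (σ0 (σ0.symm j)) - X i (σ0 i) = X i j - X i (σ0 i)
    rw [hjj]
  rw [hyval] at hyij
  show X i j = X i (σ0 i) - p i + p (σ0.symm j)
  linarith
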